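/- Let p be a polynomial in one variable with roots t₁, …, t_k, let A be a unital C*-algebra with closed two-sided ideal I, and let x ∈ A/I satisfy p(x) = 0 and ‖x‖ > max_i |t_i|. If x admits a lift X ∈ A with p(X) = 0, then x admits a lift X̃ ∈ A with p(X̃) = 0 and ‖X̃‖ = ‖x‖. -/

import Mathlib

open Polynomial
open scoped ENNReal NNReal

/-- Conjugation by a unit, as an algebra homomorphism. -/
noncomputable def conjUnitAlgHom {A : Type*} [Ring A] [Algebra ℂ A] (u : Aˣ) : A →ₐ[ℂ] A where
  toFun a := ↑u * a * ↑u⁻¹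
  map_one' := by simp
  map_mul' a b := by
    have h : (↑u⁻¹ : A) * ↑u = 1 := u.inv_mul
    calc (↑u : A) * (a * b) * ↑u⁻¹
        = (↑u * a) * ((↑u⁻¹ * ↑u) * (b * ↑u⁻¹)) := by rw [h]; noncomm_ring
      _ = (↑u * a * ↑u⁻¹) * (↑u * b * ↑u⁻¹) := by noncomm_ring
  map_zero' := by simp
  map_add' a b := by noncomm_ring
  commutes' r := by
    show (↑u : A) * (algebraMap ℂ A r) * ↑u⁻¹ = algebraMap ℂ A r
    rw [show (↑u : A) * algebraMap ℂ A r = algebraMap ℂ A r * ↑u from (Algebra.commutes r _).symm,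
      mul_assoc, u.mul_inv, mul_one]

set_option maxHeartbeats 2000000 in
/-- Lemma (basic lifting lemma): let `φ : A → B` be a surjective *-homomorphism of
unital C*-algebras (so `B ≅ A/I` with `I = ker φ`), `p` a monic polynomial with
root multiset `p.roots`, and `x ∈ B` with `p(x) = 0` and `‖x‖ > max |tᵢ|`.
If `x` lifts to `X ∈ A` with `p(X) = 0`, then it lifts to `X̃ ∈ A` with
`p(X̃) = 0` and `‖X̃‖ = ‖x‖`. -/
theorem lift_poly_relation_with_norm
    {A B : Type*}
    [NormedRing A] [StarRing A] [CStarRing A] [NormedAlgebra ℂ A]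
    [CompleteSpace A] [NormOneClass A] [StarModule ℂ A]
    [NormedRing B] [StarRing B] [CStarRing B] [NormedAlgebra ℂ B]
    [CompleteSpace B] [NormOneClass B] [StarModule ℂ B]
    (φ : A →⋆ₐ[ℂ] B) (hφ : Function.Surjective φ)
    (p : Polynomial ℂ) (hp : p.Monic)
    (x : B) (hx : aeval x p = 0)
    (hnorm : ∀ t ∈ p.roots, ‖t‖ < ‖x‖)
    (X : A) (hX : φ X = x) (hXp : aeval X p = 0) :
    ∃ X' : A, φ X' = x ∧ aeval X' p = 0 ∧ ‖X'‖ = ‖x‖ := by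
  letI : CStarAlgebra A := CStarAlgebra.mk
  letI : CStarAlgebra B := CStarAlgebra.mk
  letI := CStarAlgebra.spectralOrder A
  haveI := CStarAlgebra.spectralOrderedRing A
  letI := CStarAlgebra.spectralOrder B
  haveI := CStarAlgebra.spectralOrderedRing B
  have hφcont : Continuous φ := AddMonoidHomClass.continuous_of_bound φ 1 fun a => by
    simpa using NonUnitalStarAlgHom.norm_apply_le φ a
  haveI : Nontrivial A := ⟨⟨0, 1, by
    intro h
    have h1 := norm_one (α := A)
    rw [← h, norm_zero] at h1
    linarith⟩⟩
  set r : ℝ := ‖x‖ with hr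
  -- spectrum of X is contained in the roots of p
  have hspec : ∀ z ∈ spectrum ℂ X, z ∈ p.roots := by
    intro z hz
    have h1 : p.eval z ∈ spectrum ℂ (aeval X p) :=
      spectrum.subset_polynomial_aeval X p ⟨z, hz, rfl⟩
    rw [hXp, spectrum.zero_eq] at h1
    have h2 : p.eval z = 0 := by simpa using h1
    simpa [Polynomial.mem_roots, hp.ne_zero] using h2
  have hlt : ∀ z ∈ spectrum ℂ X, ‖z‖₊ < ‖x‖₊ := by
    intro z hz
    have := hnorm z (hspec z hz)
    exact_mod_cast this
  have hrpos : (0 : ℝ) < r := by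
    obtain ⟨z, hz⟩ := spectrum.nonempty X
    have := hlt z hz
    have h0 : (0:ℝ) ≤ ‖z‖ := norm_nonneg z
    have : ‖z‖ < ‖x‖ := this
    linarith
  have hrne : r ≠ 0 := hrpos.ne'
  have hρ : spectralRadius ℂ X < (‖x‖₊ : ℝ≥0∞) :=
    spectrum.spectralRadius_lt_of_forall_lt X hlt
  -- choose s with ρ(X) < s < r, and an eventual bound ‖Xⁿ‖ ≤ sⁿ
  obtain ⟨s, hs1, hs2⟩ := ENNReal.lt_iff_exists_nnreal_btwn.mp hρ
  have hsr : (s : ℝ) < r := by exact_mod_cast hs2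
  have hbound : ∀ᶠ n : ℕ in Filter.atTop, ‖X ^ n‖ ≤ (s : ℝ) ^ n := by
    have htend := spectrum.pow_nnnorm_pow_one_div_tendsto_nhds_spectralRadius X
    have h1 : ∀ᶠ n : ℕ in Filter.atTop,
        (‖X ^ n‖₊ : ℝ≥0∞) ^ (1 / (n:ℝ)) < (s : ℝ≥0∞) := htend.eventually_lt_const hs1
    filter_upwards [h1, Filter.eventually_ge_atTop 1] with n hn hn1
    have hne : (n : ℝ) ≠ 0 := by positivity
    have h2 : ((‖X ^ n‖₊ : ℝ≥0∞) ^ (1 / (n:ℝ))) ^ (n : ℕ) ≤ (s : ℝ≥0∞) ^ (n : ℕ) :=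
      pow_le_pow_left' hn.le n
    rw [← ENNReal.rpow_natCast ((‖X ^ n‖₊ : ℝ≥0∞) ^ (1 / (n:ℝ))), ← ENNReal.rpow_mul,
      one_div_mul_cancel hne, ENNReal.rpow_one] at h2
    have h3 : ‖X ^ n‖₊ ≤ s ^ n := by exact_mod_cast h2
    calc ‖X ^ n‖ = (‖X ^ n‖₊ : ℝ) := rfl
      _ ≤ ((s ^ n : ℝ≥0) : ℝ) := by exact_mod_cast h3
      _ = (s : ℝ) ^ n := by push_cast; ring
  -- the defect element c
  set b : A := star X * X with hbdef
  have hbsa : IsSelfAdjoint b := IsSelfAdjoint.star_mul_self X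
  set f : ℝ → ℝ := fun t => max (t - r ^ 2) 0 with hfdef
  have hfc : Continuous f := by fun_prop
  set c : A := cfc f b with hcdef
  have hc0 : (0 : A) ≤ c := cfc_nonneg fun t _ => le_max_right _ _
  have hcsa : IsSelfAdjoint c := hc0.isSelfAdjoint
  have hkey : b ≤ (r ^ 2 : ℝ) • (1 : A) + c := by
    have h1 : (r ^ 2 : ℝ) • (1 : A) + c = cfc (fun t => r ^ 2 + f t) b := by
      rw [cfc_const_add (r ^ 2) f b (hfc.continuousOn) hbsa, Algebra.algebraMap_eq_smul_one]
    have h2 : b = cfc (id : ℝ → ℝ) b := (cfc_id ℝ b hbsa).symm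
    rw [h1]
    nth_rewrite 1 [h2]
    exact cfc_mono fun t _ => by
      simp only [id, hfdef]
      have := le_max_left (t - r ^ 2) 0
      linarith
  have hφc : φ c = 0 := by
    have h1 : φ c = cfc f (φ b) :=
      StarAlgHomClass.map_cfc φ f b hfc.continuousOn hφcont hbsa (hbsa.map φ)
    have h2 : φ b = star x * x := by rw [hbdef, map_mul, map_star, hX]
    rw [h1, h2]
    have h3 : ∀ t ∈ spectrum ℝ (star x * x), f t = 0 := by
      intro t ht
      have h4 : ‖t‖ ≤ ‖star x * x‖ := spectrum.norm_le_norm_of_mem ht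
      have h5 : ‖star x * x‖ = r ^ 2 := by
        rw [CStarRing.norm_star_mul_self]; ring
      have h6 : t ≤ r ^ 2 := (le_abs_self t).trans (by rwa [← Real.norm_eq_abs, ← h5])
      simp only [hfdef, max_eq_right_iff]
      linarith
    calc cfc f (star x * x) = cfc (fun _ : ℝ => (0:ℝ)) (star x * x) := cfc_congr h3
      _ = 0 := cfc_const_zero ℝ _
  -- the series
  set Z : ℕ → A := fun n => ((r⁻¹ : ℝ) ^ (n + 1)) • X ^ n with hZdef
  set g : ℕ → A := fun n => star (Z n) * c * Z n with hgdef
  have hg0 : ∀ n, (0 : A) ≤ g n := fun n => star_left_conjugate_nonneg hc0 _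
  have hgnorm : ∀ᶠ n : ℕ in Filter.atTop,
      ‖g n‖ ≤ (‖c‖ / r ^ 2) * (((s:ℝ) / r) ^ 2) ^ n := by
    filter_upwards [hbound] with n hn
    have hZn : ‖Z n‖ ≤ (r⁻¹ : ℝ) ^ (n + 1) * (s:ℝ) ^ n := by
      rw [hZdef]
      simp only [norm_smul, Real.norm_eq_abs]
      rw [abs_of_nonneg (by positivity)]
      exact mul_le_mul_of_nonneg_left hn (by positivity)
    have h1 : ‖g n‖ ≤ ‖Z n‖ * ‖c‖ * ‖Z n‖ := by
      calc ‖g n‖ ≤ ‖star (Z n) * c‖ * ‖Z n‖ := norm_mul_le _ _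
        _ ≤ ‖star (Z n)‖ * ‖c‖ * ‖Z n‖ :=
            mul_le_mul_of_nonneg_right (norm_mul_le _ _) (norm_nonneg _)
        _ = ‖Z n‖ * ‖c‖ * ‖Z n‖ := by rw [norm_star]
    have hZn0 : (0:ℝ) ≤ ‖Z n‖ := norm_nonneg _
    calc ‖g n‖ ≤ ‖Z n‖ * ‖c‖ * ‖Z n‖ := h1
      _ ≤ ((r⁻¹:ℝ) ^ (n+1) * (s:ℝ) ^ n) * ‖c‖ * ((r⁻¹:ℝ) ^ (n+1) * (s:ℝ) ^ n) := by
          apply mul_le_mul (mul_le_mul_of_nonneg_right hZn (norm_nonneg c)) hZn hZn0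
          positivity
      _ = (‖c‖ / r ^ 2) * (((s:ℝ) / r) ^ 2) ^ n := by
          ring
  have hsum : Summable g := by
    apply Summable.of_norm_bounded_eventually_nat ?_ hgnorm
    apply Summable.mul_left
    apply summable_geometric_of_lt_one (by positivity)
    rw [div_pow]
    rw [div_lt_one (by positivity)]
    have : (s:ℝ) ^ 2 < r ^ 2 := by
      apply pow_lt_pow_left₀ hsr (by positivity)
      norm_num
    exact this
  set S : A := ∑' n, g n with hSdef
  have hS0 : (0 : A) ≤ S := tsum_nonneg hg0
  set d : A := 1 + S with hddef
  have h10 : (0 : A) ≤ 1 := by simpa using star_mul_self_nonneg (1 : A)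
  have hd1 : (1 : A) ≤ d := le_add_of_nonneg_right hS0
  have hd0 : (0 : A) ≤ d := h10.trans hd1
  have hdsa : IsSelfAdjoint d := hd0.isSelfAdjoint
  -- φ S = 0, φ d = 1
  have hφg : ∀ n, φ (g n) = 0 := by
    intro n
    rw [hgdef]
    simp only [map_mul, map_star, hφc]
    rw [mul_zero, zero_mul]
  have hφS : φ S = 0 := by
    have h1 : HasSum (fun n => φ (g n)) (φ S) := hsum.hasSum.map φ hφcont
    have h2 : (fun n => φ (g n)) = fun _ => (0 : B) := funext hφg
    rw [h2] at h1
    exact h1.unique hasSum_zero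
  have hφd : φ d = 1 := by rw [hddef, map_add, map_one, hφS, add_zero]
  -- spectrum of d lies in [1, ∞)
  have hdspec : ∀ t ∈ spectrum ℝ d, 1 ≤ t := by
    intro t ht
    have h1 : d = algebraMap ℝ A 1 + S := by rw [hddef, map_one]
    rw [h1, ← spectrum.singleton_add_eq] at ht
    obtain ⟨t1, ht1, t2, ht2, rfl⟩ := Set.mem_add.mp ht
    have h2 : (0:ℝ) ≤ t2 := spectrum_nonneg_of_nonneg hS0 ht2
    have h3 : t1 = 1 := by simpa using ht1
    linarith
  -- square root of d and its inverse
  have hsqcont : ContinuousOn Real.sqrt (spectrum ℝ d) := Real.continuous_sqrt.continuousOn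
  have hsqne : ∀ t ∈ spectrum ℝ d, Real.sqrt t ≠ 0 := by
    intro t ht
    have := hdspec t ht
    exact (Real.sqrt_pos.mpr (by linarith)).ne'
  have hinvcont : ContinuousOn (fun t => (Real.sqrt t)⁻¹) (spectrum ℝ d) :=
    hsqcont.inv₀ hsqne
  set u : A := cfc Real.sqrt d with hudef
  set v : A := cfc (fun t => (Real.sqrt t)⁻¹) d with hvdef
  have husa : IsSelfAdjoint u := cfc_predicate _ _
  have hvsa : IsSelfAdjoint v := cfc_predicate _ _
  have hu0 : (0 : A) ≤ u := cfc_nonneg fun t _ => Real.sqrt_nonneg t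
  have huv : u * v = 1 := by
    rw [hudef, hvdef, ← cfc_mul _ _ d hsqcont hinvcont]
    calc cfc (fun t => Real.sqrt t * (Real.sqrt t)⁻¹) d
        = cfc (fun _ : ℝ => (1:ℝ)) d := cfc_congr fun t ht => mul_inv_cancel₀ (hsqne t ht)
      _ = 1 := cfc_const_one ℝ d
  have hvu : v * u = 1 := by
    rw [hudef, hvdef, ← cfc_mul _ _ d hinvcont hsqcont]
    calc cfc (fun t => (Real.sqrt t)⁻¹ * Real.sqrt t) d
        = cfc (fun _ : ℝ => (1:ℝ)) d := cfc_congr fun t ht => inv_mul_cancel₀ (hsqne t ht)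
      _ = 1 := cfc_const_one ℝ d
  have huu : u * u = d := by
    rw [hudef, ← cfc_mul _ _ d hsqcont hsqcont]
    calc cfc (fun t => Real.sqrt t * Real.sqrt t) d
        = cfc (id : ℝ → ℝ) d := cfc_congr fun t ht =>
            Real.mul_self_sqrt (by linarith [hdspec t ht])
      _ = d := cfc_id ℝ d hdsa
  have hφu : φ u = 1 := by
    rw [hudef, StarAlgHomClass.map_cfc φ Real.sqrt d hsqcont hφcont hdsa (hdsa.map φ), hφd]
    rw [show (1 : B) = algebraMap ℝ B 1 by rw [map_one], cfc_algebraMap]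
    rw [Real.sqrt_one, map_one]
  have hφv : φ v = 1 := by
    have h1 := congrArg φ hvu
    rw [map_mul, hφu, mul_one, map_one] at h1
    exact h1
  -- the key inequality : star X * d * X ≤ r² • d
  have hterm : ∀ n, star X * g n * X = (r ^ 2 : ℝ) • g (n + 1) := by
    intro n
    have hz : Z n * X = (r : ℝ) • Z (n + 1) := by
      rw [hZdef]
      simp only [smul_mul_assoc, smul_smul, ← pow_succ]
      congr 1
      rw [pow_succ, pow_succ]
      field_simp
      ring_nf; rw [mul_inv_cancel₀ hrne, one_mul]
    have hz' : star X * star (Z n) = (r : ℝ) • star (Z (n + 1)) := by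
      rw [← star_mul, hz, star_smul]
      simp
    rw [hgdef]
    simp only
    calc star X * (star (Z n) * c * Z n) * X
        = (star X * star (Z n)) * c * (Z n * X) := by noncomm_ring
      _ = ((r:ℝ) • star (Z (n+1))) * c * ((r:ℝ) • Z (n+1)) := by rw [hz, hz']
      _ = (r ^ 2 : ℝ) • (star (Z (n+1)) * c * Z (n+1)) := by
          simp only [smul_mul_assoc, mul_smul_comm, smul_smul]
          congr 1
          ring
  have hg00 : g 0 = ((r⁻¹ * r⁻¹ : ℝ)) • c := by
    have hZ0 : Z 0 = (r⁻¹ : ℝ) • (1 : A) := by rw [hZdef]; simp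
    rw [hgdef]
    simp only [hZ0, star_smul, star_trivial, star_one, smul_mul_assoc, mul_smul_comm,
      mul_one, one_mul, smul_smul]
  have hg0eq : (r ^ 2 : ℝ) • g 0 = c := by
    rw [hg00, smul_smul, show (r:ℝ) ^ 2 * (r⁻¹ * r⁻¹) = 1 by rw [pow_two]; field_simp, one_smul]
  have hXSX : star X * S * X = (r ^ 2 : ℝ) • S - c := by
    have hL := (ContinuousLinearMap.mulLeftRight ℂ A (star X) X).map_tsum hsum
    have hL' : star X * S * X = ∑' n, star X * g n * X := by
      simpa [ContinuousLinearMap.mulLeftRight_apply] using hL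
    have hshift : Summable fun n => g (n + 1) := (summable_nat_add_iff 1).mpr hsum
    have h2 : ∑' n, star X * g n * X = (r ^ 2 : ℝ) • ∑' n, g (n + 1) := by
      rw [tsum_congr hterm]
      exact (hshift.hasSum.const_smul _).tsum_eq
    have h3 : S = g 0 + ∑' n, g (n + 1) := Summable.tsum_eq_zero_add hsum
    rw [hL', h2]
    rw [show (∑' n, g (n+1)) = S - g 0 by rw [h3]; abel]
    rw [smul_sub, hg0eq]
  have hXdX : star X * d * X ≤ (r ^ 2 : ℝ) • d := by
    have hexp : star X * d * X = star X * X + star X * S * X := by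
      rw [hddef]; noncomm_ring
    rw [hexp, hXSX]
    have h4 : (r ^ 2 : ℝ) • d = (r ^ 2 : ℝ) • (1:A) + (r ^ 2 : ℝ) • S := by
      rw [hddef, smul_add]
    rw [h4]
    have h5 : star X * X - c ≤ (r ^ 2 : ℝ) • (1:A) := sub_le_iff_le_add.mpr hkey
    calc star X * X + ((r ^ 2 : ℝ) • S - c)
        = (star X * X - c) + (r ^ 2 : ℝ) • S := by abel
      _ ≤ (r ^ 2 : ℝ) • (1:A) + (r ^ 2 : ℝ) • S := add_le_add_left h5 _
  -- the conjugated lift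
  set X' : A := u * X * v with hX'def
  have hφX' : φ X' = x := by
    rw [hX'def, map_mul, map_mul, hφu, hφv, one_mul, mul_one, hX]
  have haeval : aeval X' p = 0 := by
    let U : Aˣ := ⟨u, v, huv, hvu⟩
    have h1 : X' = conjUnitAlgHom U X := rfl
    rw [h1, Polynomial.aeval_algHom_apply (conjUnitAlgHom U) X p, hXp, map_zero]
  refine ⟨X', hφX', haeval, ?_⟩
  have hge : r ≤ ‖X'‖ := by
    have h1 := NonUnitalStarAlgHom.norm_apply_le φ X'
    rwa [hφX'] at h1
  have hle : ‖X'‖ ≤ r := by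
    have h1 : star X' * X' = v * (star X * d * X) * v := by
      rw [hX'def]
      simp only [star_mul, husa.star_eq, hvsa.star_eq]
      rw [← huu]
      noncomm_ring
    have h2 : star X' * X' ≤ (r ^ 2 : ℝ) • (1:A) := by
      rw [h1]
      calc v * (star X * d * X) * v
          = star v * (star X * d * X) * v := by rw [hvsa.star_eq]
        _ ≤ star v * ((r ^ 2 : ℝ) • d) * v := star_left_conjugate_le_conjugate hXdX v
        _ = (r ^ 2 : ℝ) • (v * d * v) := by
            rw [hvsa.star_eq]
            simp only [smul_mul_assoc, mul_smul_comm]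
        _ = (r ^ 2 : ℝ) • (1:A) := by
            rw [← huu, show v * (u * u) * v = (v * u) * (u * v) by noncomm_ring, hvu, huv,
              one_mul]
    have h3 : ‖star X' * X'‖ ≤ r ^ 2 := by
      calc ‖star X' * X'‖ ≤ ‖(r ^ 2 : ℝ) • (1:A)‖ :=
            CStarAlgebra.norm_le_norm_of_nonneg_of_le (star_mul_self_nonneg X') h2
        _ = r ^ 2 := by
            rw [norm_smul, norm_one, mul_one, Real.norm_eq_abs, abs_of_nonneg (by positivity)]
    have h4 : ‖X'‖ * ‖X'‖ ≤ r * r := by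
      rw [← CStarRing.norm_star_mul_self]
      nlinarith
    nlinarith [norm_nonneg X']
  linarith
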